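/- Let G : [0,T] → Matrix(n,n,ℝ) be continuous with nonnegative off-diagonal entries and rows summing to zero, and let Y solve Y'(t) = Y(t)·G(t), Y(0) = I. Then all entries of Y(t) are nonnegative for all t ∈ [0,T], and hence Y(t) is a row-stochastic matrix. -/

import Mathlib

open Set

theorem transition_matrix_stochastic
    (n : ℕ) (T : ℝ) (hT : 0 ≤ T)
    (G : ℝ → Matrix (Fin n) (Fin n) ℝ)
    (hGcont : ∀ i j, ContinuousOn (fun t => G t i j) (Icc 0 T))
    (hGoffdiag : ∀ t ∈ Icc (0 : ℝ) T, ∀ i j, i ≠ j → 0 ≤ G t i j)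
    (hGrow : ∀ t ∈ Icc (0 : ℝ) T, ∀ i, ∑ j, G t i j = 0)
    (Y : ℝ → Matrix (Fin n) (Fin n) ℝ)
    (hY : ∀ t ∈ Icc (0 : ℝ) T, ∀ i j,
      HasDerivWithinAt (fun s => Y s i j) ((Y t * G t) i j) (Icc 0 T) t)
    (hY0 : Y 0 = 1) :
    ∀ t ∈ Icc (0 : ℝ) T, (∀ i j, 0 ≤ Y t i j) ∧ (∀ i, ∑ j, Y t i j = 1) := by
  -- continuity of entries of Y
  have hYcont : ∀ i j, ContinuousOn (fun t => Y t i j) (Icc 0 T) :=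
    fun i j t ht => (hY t ht i j).continuousWithinAt
  -- bound on entries of G
  obtain ⟨C, hC0, hC⟩ : ∃ C, 0 ≤ C ∧ ∀ t ∈ Icc (0:ℝ) T, ∀ i j, |G t i j| ≤ C := by
    obtain ⟨C, hC⟩ := (isCompact_Icc (a := (0:ℝ)) (b := T)).exists_bound_of_continuousOn
      (f := fun t => ∑ p : Fin n × Fin n, |G t p.1 p.2|)
      (continuousOn_finset_sum _ fun p _ => (hGcont p.1 p.2).abs)
    refine ⟨C, le_trans (norm_nonneg _) (hC 0 ⟨le_refl _, hT⟩), fun t ht i j => ?_⟩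
    calc |G t i j| ≤ ∑ p : Fin n × Fin n, |G t p.1 p.2| :=
          Finset.single_le_sum (f := fun p : Fin n × Fin n => |G t p.1 p.2|)
            (fun p _ => abs_nonneg _) (Finset.mem_univ (i, j))
      _ ≤ ‖∑ p : Fin n × Fin n, |G t p.1 p.2|‖ := le_abs_self _
      _ ≤ C := hC t ht
  -- diagonal entries of G are nonpositive
  have hdiag : ∀ t ∈ Icc (0:ℝ) T, ∀ j, G t j j ≤ 0 := by
    intro t ht j
    have h := hGrow t ht j
    rw [← Finset.add_sum_erase _ _ (Finset.mem_univ j)] at h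
    have hsum : 0 ≤ ∑ k ∈ Finset.univ.erase j, G t j k :=
      Finset.sum_nonneg fun k hk =>
        hGoffdiag t ht j k (Ne.symm (Finset.mem_erase.mp hk).1)
    linarith
  set A : ℝ := n * C + 1 with hAdef
  have hApos : 0 < A := by positivity
  -- key: perturbed entries stay positive
  have key : ∀ ε > 0, ∀ t ∈ Icc (0:ℝ) T, ∀ i j,
      0 < Y t i j + ε * Real.exp (A * t) := by
    intro ε hε
    by_contra hcon
    push_neg at hcon
    obtain ⟨t₁, ht₁, i₁, j₁, hle⟩ := hcon
    set f : Fin n → Fin n → ℝ → ℝ := fun i j t => Y t i j + ε * Real.exp (A * t)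
      with hfdef
    have hfc : ∀ i j, ContinuousOn (f i j) (Icc 0 T) := by
      intro i j
      exact (hYcont i j).add
        ((continuous_const.mul (Real.continuous_exp.comp
          (continuous_const.mul continuous_id))).continuousOn)
    set S : Set ℝ := {t | t ∈ Icc (0:ℝ) T ∧ ∃ i j, f i j t ≤ 0} with hSdef
    have hScl : IsClosed S := by
      have hSeq : S = ⋃ i, ⋃ j, (Icc (0:ℝ) T ∩ (f i j) ⁻¹' Iic 0) := by
        ext t
        simp only [hSdef, mem_setOf_eq, mem_iUnion, mem_inter_iff, mem_preimage,
          mem_Iic]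
        tauto
      rw [hSeq]
      exact isClosed_iUnion_of_finite fun i => isClosed_iUnion_of_finite fun j =>
        (hfc i j).preimage_isClosed_of_isClosed isClosed_Icc isClosed_Iic
    have hSne : S.Nonempty := ⟨t₁, ht₁, i₁, j₁, hle⟩
    have hSbdd : BddBelow S := ⟨0, fun t ht => ht.1.1⟩
    set t₀ := sInf S with ht₀def
    have ht₀S : t₀ ∈ S := hScl.csInf_mem hSne hSbdd
    obtain ⟨ht₀Icc, i, j, hfij⟩ := ht₀S
    have hf0pos : ∀ k l, 0 < f k l 0 := by
      intro k l
      have h1 : Y 0 k l = if k = l then 1 else 0 := by rw [hY0]; rfl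
      simp only [hfdef, mul_zero, Real.exp_zero, mul_one, h1]
      split <;> linarith
    have ht₀pos : 0 < t₀ := by
      rcases (ht₀Icc.1).lt_or_eq with h | h
      · exact h
      · exfalso
        rw [← h] at hfij
        linarith [hf0pos i j]
    -- positivity strictly before t₀
    have hpos : ∀ t ∈ Ico (0:ℝ) t₀, ∀ k l, 0 < f k l t := by
      intro t ht k l
      by_contra h
      push_neg at h
      have htS : t ∈ S := ⟨⟨ht.1, ht.2.le.trans ht₀Icc.2⟩, k, l, h⟩
      exact absurd (csInf_le hSbdd htS) (not_le.mpr ht.2)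
    have hneb : (nhdsWithin t₀ (Ico 0 t₀)).NeBot := by
      rw [nhdsWithin_Ico_eq_nhdsLT ht₀pos]
      infer_instance
    have hsub : Ico (0:ℝ) t₀ ⊆ Icc 0 T :=
      fun t ht => ⟨ht.1, ht.2.le.trans ht₀Icc.2⟩
    have hnonneg : ∀ k l, 0 ≤ f k l t₀ := by
      intro k l
      have htend : Filter.Tendsto (f k l) (nhdsWithin t₀ (Ico 0 t₀))
          (nhds (f k l t₀)) := (hfc k l t₀ ht₀Icc).mono hsub
      exact ge_of_tendsto htend <| by
        filter_upwards [self_mem_nhdsWithin] with t ht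
        exact (hpos t ht k l).le
    have hfij0 : f i j t₀ = 0 := le_antisymm hfij (hnonneg i j)
    set E := Real.exp (A * t₀) with hEdef
    have hEpos : 0 < E := Real.exp_pos _
    have hYlb : ∀ k l, -(ε * E) ≤ Y t₀ k l := by
      intro k l
      have := hnonneg k l
      simp only [hfdef] at this
      linarith
    have hYij : Y t₀ i j = -(ε * E) := by
      simp only [hfdef] at hfij0
      linarith
    -- derivative of f i j at t₀
    have hexp : HasDerivAt (fun t : ℝ => Real.exp (A * t)) (A * E) t₀ := by
      have h1 : HasDerivAt (fun t : ℝ => A * t) A t₀ := by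
        simpa using (hasDerivAt_id t₀).const_mul A
      have h2 := (Real.hasDerivAt_exp (A * t₀)).comp t₀ h1
      have h3 : Real.exp (A * t₀) * A = A * E := by rw [hEdef]; ring
      rw [h3] at h2
      exact h2
    have hder : HasDerivWithinAt (f i j)
        ((Y t₀ * G t₀) i j + ε * (A * E)) (Icc 0 T) t₀ :=
      (hY t₀ ht₀Icc i j).add ((hexp.const_mul ε).hasDerivWithinAt)
    -- the derivative is positive
    have hd : 0 < (Y t₀ * G t₀) i j + ε * (A * E) := by
      have hterm : ∀ k : Fin n, -(ε * E) * C ≤ Y t₀ i k * G t₀ k j := by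
        intro k
        rcases eq_or_ne k j with rfl | hkj
        · have h1 : G t₀ k k ≤ 0 := hdiag t₀ ht₀Icc k
          have h2 : 0 ≤ Y t₀ i k * G t₀ k k := by
            rw [hYij]
            nlinarith [mul_nonneg (mul_nonneg hε.le hEpos.le) (neg_nonneg.mpr h1)]
          nlinarith [mul_nonneg (mul_nonneg hε.le hEpos.le) hC0]
        · have h1 : 0 ≤ G t₀ k j := hGoffdiag t₀ ht₀Icc k j hkj
          have h2 : G t₀ k j ≤ C := (abs_le.mp (hC t₀ ht₀Icc k j)).2
          nlinarith [mul_nonneg (by linarith [hYlb i k] : (0:ℝ) ≤ Y t₀ i k + ε * E) h1,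
            mul_nonneg (mul_nonneg hε.le hEpos.le) (by linarith : (0:ℝ) ≤ C - G t₀ k j)]
      have hsum : -(ε * E) * (n * C) ≤ (Y t₀ * G t₀) i j := by
        rw [Matrix.mul_apply]
        calc -(ε * E) * (n * C) = ∑ _k : Fin n, -(ε * E) * C := by
              simp [Finset.sum_const]; ring
          _ ≤ ∑ k, Y t₀ i k * G t₀ k j := Finset.sum_le_sum fun k _ => hterm k
      have : ε * (A * E) = ε * E * (n * C) + ε * E := by rw [hAdef]; ring
      nlinarith
    -- but the derivative must be nonpositive (left minimum at t₀)
    have hsub2 : Ico (0:ℝ) t₀ ⊆ Icc 0 T \ {t₀} :=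
      fun t ht => ⟨hsub ht, ne_of_lt ht.2⟩
    have hslope := hasDerivWithinAt_iff_tendsto_slope.mp hder
    have hslope' := hslope.mono_left (nhdsWithin_mono t₀ hsub2)
    have hle0 : (Y t₀ * G t₀) i j + ε * (A * E) ≤ 0 := by
      refine le_of_tendsto hslope' ?_
      filter_upwards [self_mem_nhdsWithin] with t ht
      have hft : 0 < f i j t := hpos t ht i j
      rw [slope_def_field]
      apply div_nonpos_of_nonneg_of_nonpos
      · rw [hfij0]; linarith
      · linarith [ht.2]
    linarith
  -- nonnegativity
  have hnn : ∀ t ∈ Icc (0:ℝ) T, ∀ i j, 0 ≤ Y t i j := by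
    intro t ht i j
    by_contra h
    push_neg at h
    set E := Real.exp (A * t) with hEdef
    have hEpos : 0 < E := Real.exp_pos _
    set ε : ℝ := -Y t i j / (2 * E) with hεdef
    have hε : 0 < ε := div_pos (by linarith) (by linarith)
    have hk := key ε hε t ht i j
    rw [← hEdef] at hk
    have : ε * E = -Y t i j / 2 := by
      rw [hεdef]
      field_simp
    rw [this] at hk
    linarith
  -- row sums are constantly 1
  have hrow : ∀ t ∈ Icc (0:ℝ) T, ∀ i, ∑ j, Y t i j = 1 := by
    intro t ht i
    have hconst : ∀ x ∈ Icc (0:ℝ) T,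
        (fun s => ∑ j, Y s i j) x = (fun s => ∑ j, Y s i j) 0 := by
      apply constant_of_has_deriv_right_zero
      · exact continuousOn_finset_sum _ fun j _ => hYcont i j
      · intro x hx
        have hxIcc : x ∈ Icc (0:ℝ) T := ⟨hx.1, hx.2.le⟩
        have h0 : HasDerivWithinAt (fun s => ∑ j, Y s i j)
            (∑ j, (Y x * G x) i j) (Icc 0 T) x :=
          HasDerivWithinAt.fun_sum fun j _ => hY x hxIcc i j
        have hz : ∑ j, (Y x * G x) i j = 0 := by
          simp only [Matrix.mul_apply]
          rw [Finset.sum_comm]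
          calc ∑ k, ∑ j, Y x i k * G x k j
              = ∑ k : Fin n, Y x i k * ∑ j, G x k j := by
                simp [Finset.mul_sum]
            _ = 0 := by
                refine Finset.sum_eq_zero fun k _ => ?_
                rw [hGrow x hxIcc k, mul_zero]
        rw [hz] at h0
        refine h0.mono_of_mem_nhdsWithin ?_
        exact Icc_mem_nhdsGE_of_mem hx
    have h1 := hconst t ht
    simp only at h1
    rw [h1, hY0]
    simp [Matrix.one_apply]
  exact fun t ht => ⟨hnn t ht, hrow t ht⟩
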